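/- Let f be convex on [0,1] with minimizer x* ∈ [l, r] ⊆ [0,1], and let x_c = (l+r)/2 and x_r = l + 3(r-l)/4. If x* ≤ x_c, then f(x*) ≥ f(x_r) - 3|f(x_c) - f(x_r)|. -/

import Mathlib

theorem stmt_2 (f : ℝ → ℝ) (hf : ConvexOn ℝ (Set.Icc (0:ℝ) 1) f)
    (l r xstar : ℝ) (hl : 0 ≤ l) (hlr : l < r) (hr : r ≤ 1)
    (xc xr : ℝ) (hxc : xc = l + (r - l)/2) (hxr : xr = l + 3*(r - l)/4)
    (hxstar : xstar ∈ Set.Icc l r) (hxstarc : xstar ≤ xc)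
    (hmin : ∀ y ∈ Set.Icc (0:ℝ) 1, f xstar ≤ f y) :
    f xstar ≥ f xr - 3 * |f xc - f xr| := by
  obtain ⟨hsl, hsr⟩ := hxstar
  have hd : 0 < r - l := by linarith
  have hden : 0 < xr - xstar := by
    have : xstar ≤ xc := hxstarc
    rw [hxr]; rw [hxc] at this; linarith
  set a : ℝ := (xr - xc) / (xr - xstar) with ha_def
  set b : ℝ := (xc - xstar) / (xr - xstar) with hb_def
  have ha : 0 ≤ a := by
    apply div_nonneg _ hden.le
    rw [hxr, hxc]; linarith
  have hb : 0 ≤ b := div_nonneg (by linarith) hden.le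
  have hab : a + b = 1 := by
    rw [ha_def, hb_def]; field_simp; ring
  have hcomb : a * xstar + b * xr = xc := by
    rw [ha_def, hb_def]; field_simp; ring
  have hmem1 : xstar ∈ Set.Icc (0:ℝ) 1 := ⟨by linarith, by linarith⟩
  have hmem2 : xr ∈ Set.Icc (0:ℝ) 1 := ⟨by rw [hxr]; linarith, by rw [hxr]; linarith⟩
  have hconv := hf.2 hmem1 hmem2 ha hb hab
  rw [smul_eq_mul, smul_eq_mul, smul_eq_mul, smul_eq_mul, hcomb] at hconv
  have ha3 : (1:ℝ)/3 ≤ a := by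
    rw [ha_def, le_div_iff₀ hden, hxr, hxc]
    linarith
  have hb' : b = 1 - a := by linarith
  rw [hb'] at hconv
  have key : a * (f xstar - f xr) ≥ f xc - f xr := by nlinarith [hconv]
  rcases le_or_gt (f xr) (f xc) with h | h
  · rw [abs_of_nonneg (by linarith)]
    nlinarith [key, mul_nonneg (by linarith : (0:ℝ) ≤ 3*a - 1) (by linarith : (0:ℝ) ≤ f xc - f xr)]
  · rw [abs_of_neg (by linarith)]
    nlinarith [key, mul_nonneg (by linarith : (0:ℝ) ≤ 3*a - 1) (by linarith : (0:ℝ) ≤ f xr - f xc)]
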